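/- Let π_n, π ∈ Π. If π_n → π in the J1 topology, then the closed graphs π_n converge to the closed graph π in the local Hausdorff topology on Cl(S), where S := ℝ̄ × ℝ. Similarly, if π_n → π in the M1 topology, then the filled graphs π̄_n converge to π̄ in the local Hausdorff topology on Cl(S). -/

import Mathlib

noncomputable section

open Set Filter Topology MeasureTheory

namespace PathsPaper

/-- `tanh` extended to `EReal`, with `tanh (±∞) := ±1`. -/
def etanh (x : EReal) : ℝ :=
  if x = ⊤ then 1 else if x = ⊥ then -1 else Real.tanh x.toReal

/-- The squeezed space `ℝ²_c = (ℝ̄ × ℝ) ∪ {(∗,−∞), (∗,+∞)}`; here `Sum.inr false`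
represents `(∗,−∞)` and `Sum.inr true` represents `(∗,+∞)`. -/
abbrev Rsq := (EReal × ℝ) ⊕ Bool

/-- The embedding `Θ` of the squeezed space into `ℝ²`. -/
def theta : Rsq → ℝ × ℝ
  | Sum.inl p => (etanh p.1 / (1 + |p.2|), Real.tanh p.2)
  | Sum.inr b => (0, if b then 1 else -1)

/-- The metric `d_sqz` on the squeezed space (Euclidean distance of the `Θ`-images). -/
def dSqz (z z' : Rsq) : ℝ :=
  Real.sqrt (((theta z).1 - (theta z').1) ^ 2 + ((theta z).2 - (theta z').2) ^ 2)

/-- A path: a closed time domain `I ⊆ ℝ` together with a left value function `l = π(·−)`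
and a right value function `r = π(·+)` with values in `ℝ̄ = EReal`, such that `r` is
right-continuous along `I`, `l` is left-continuous along `I`, `l t = lim_{s↑t, s∈I} r s`
whenever `t` is a left accumulation point of `I`, and `r t = lim_{s↓t, s∈I} l s` whenever
`t` is a right accumulation point of `I`.  (The values outside `I` are normalised to `0`
so that a path is determined by its values on `I`.) -/
structure PathSp where
  I : Set ℝ
  closed_I : IsClosed I
  l : ℝ → EReal
  r : ℝ → EReal
  l_default : ∀ t, t ∉ I → l t = 0
  r_default : ∀ t, t ∉ I → r t = 0
  right_cont : ∀ t ∈ I, Tendsto r (𝓝[I ∩ Ioi t] t) (𝓝 (r t))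
  left_cont : ∀ t ∈ I, Tendsto l (𝓝[I ∩ Iio t] t) (𝓝 (l t))
  left_lim : ∀ t ∈ I, Tendsto r (𝓝[I ∩ Iio t] t) (𝓝 (l t))
  right_lim : ∀ t ∈ I, Tendsto l (𝓝[I ∩ Ioi t] t) (𝓝 (r t))

/-- The closed graph of a path, a subset of `S = ℝ̄ × ℝ`. -/
def graph (π : PathSp) : Set (EReal × ℝ) :=
  {p | p.2 ∈ π.I ∧ (p.1 = π.l p.2 ∨ p.1 = π.r p.2)}

/-- The filled graph of a path. -/
def fgraph (π : PathSp) : Set (EReal × ℝ) :=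
  {p | p.2 ∈ π.I ∧ p.1 ∈ uIcc (π.l p.2) (π.r p.2)}

/-- The strict total order `≺` on the (filled) graph of `π`: `(x,s) ≺ (y,t)` iff `s < t`,
or `s = t` and `x ≠ y` and `x` lies between `π(t−)` and `y`. -/
def gLt (π : PathSp) (p q : EReal × ℝ) : Prop :=
  p.2 < q.2 ∨ (p.2 = q.2 ∧ p.1 ≠ q.1 ∧ p.1 ∈ uIcc (π.l q.2) q.1)

/-- The total order `⪯` on the (filled) graph of `π`. -/
def gLe (π : PathSp) (p q : EReal × ℝ) : Prop := p = q ∨ gLt π p q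

/-- `π∗` (resp. `π̄∗`): a graph together with the two points at infinity of the squeezed
space. -/
def starSet (G : Set (EReal × ℝ)) : Set Rsq :=
  (Sum.inl '' G) ∪ {Sum.inr false, Sum.inr true}

/-- The order `≺` extended to the squeezed space, `(∗,−∞)` minimal, `(∗,+∞)` maximal. -/
def sLt (π : PathSp) : Rsq → Rsq → Prop
  | Sum.inl p, Sum.inl q => gLt π p q
  | Sum.inl _, Sum.inr b => b = true
  | Sum.inr b, Sum.inl _ => b = false
  | Sum.inr b, Sum.inr b' => b = false ∧ b' = true

/-- `C` is a correspondence between `A` and `B`. -/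
def IsCorr (A B : Set Rsq) (C : Set (Rsq × Rsq)) : Prop :=
  C ⊆ A ×ˢ B ∧ (∀ a ∈ A, ∃ b ∈ B, (a, b) ∈ C) ∧ (∀ b ∈ B, ∃ a ∈ A, (a, b) ∈ C)

/-- A correspondence is monotone if it contains no pair of order-violating elements. -/
def IsMono (π₁ π₂ : PathSp) (C : Set (Rsq × Rsq)) : Prop :=
  ¬ ∃ z ∈ C, ∃ z' ∈ C, sLt π₁ z.1 z'.1 ∧ sLt π₂ z'.2 z.2

def corrSup (C : Set (Rsq × Rsq)) : ℝ := sSup ((fun z : Rsq × Rsq => dSqz z.1 z.2) '' C)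

/-- The Skorohod J1 metric on the path space. -/
def dJ1 (π₁ π₂ : PathSp) : ℝ :=
  sInf {h | ∃ C, IsCorr (starSet (graph π₁)) (starSet (graph π₂)) C ∧ IsMono π₁ π₂ C ∧
    h = corrSup C}

/-- The Skorohod M1 metric on the path space. -/
def dM1 (π₁ π₂ : PathSp) : ℝ :=
  sInf {h | ∃ C, IsCorr (starSet (fgraph π₁)) (starSet (fgraph π₂)) C ∧ IsMono π₁ π₂ C ∧
    h = corrSup C}

/-- The topology generated by the open balls of a distance function (for a metric, this
is the metric topology). -/
def ballTop {X : Type*} (d : X → X → ℝ) : TopologicalSpace X :=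
  TopologicalSpace.generateFrom {U | ∃ x ε, 0 < ε ∧ U = {y | d x y < ε}}

/-- The J1 topology on the path space. -/
def J1Top : TopologicalSpace PathSp := ballTop dJ1

/-- The M1 topology on the path space. -/
def M1Top : TopologicalSpace PathSp := ballTop dM1

/-- Convergence of a sequence of paths in the J1 topology. -/
def J1Conv (πn : ℕ → PathSp) (π : PathSp) : Prop :=
  Tendsto (fun n => dJ1 (πn n) π) atTop (𝓝 0)

/-- Convergence of a sequence of paths in the M1 topology. -/
def M1Conv (πn : ℕ → PathSp) (π : PathSp) : Prop :=
  Tendsto (fun n => dM1 (πn n) π) atTop (𝓝 0)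

/-- The Hausdorff distance between two sets associated with a distance function `d`. -/
def hausDist {X : Type*} (d : X → X → ℝ) (A B : Set X) : ℝ :=
  max (sSup ((fun a => sInf ((fun b => d a b) '' B)) '' A))
      (sSup ((fun b => sInf ((fun a => d a b) '' A)) '' B))

/-- `K_+(X)`: the nonempty compact subsets of a topological space. -/
def KP {X : Type*} (τ : TopologicalSpace X) : Type _ :=
  {A : Set X // @IsCompact X τ A ∧ A.Nonempty}

/-- The Hausdorff topology on `K_+(X)`, from a metric `d` generating `τ`. -/
def KPtop {X : Type*} (τ : TopologicalSpace X) (d : X → X → ℝ) : TopologicalSpace (KP τ) :=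
  ballTop (fun A B => hausDist d A.1 B.1)

/-- Tightness of the laws of a family of random variables `A γ` with values in a space `K`
equipped with a topology `τK`: for every `ε > 0` there is a compact `C ⊆ K` whose
complement has probability at most `ε` for every `γ`. -/
def Tight {Γ : Type*} {K : Type*} (τK : TopologicalSpace K)
    {Ω : Γ → Type*} [∀ γ, MeasurableSpace (Ω γ)]
    (P : ∀ γ, Measure (Ω γ)) (A : ∀ γ, Ω γ → K) : Prop :=
  ∀ ε : ℝ, 0 < ε → ∃ C : Set K, @IsCompact K τK C ∧
    ∀ γ, P γ {ω | A γ ω ∉ C} ≤ ENNReal.ofReal ε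

/-- `Δ²_{T,δ}(π)`. -/
def Delta2 (π : PathSp) (T δ : ℝ) : Set (EReal × EReal) :=
  {p | ∃ s t : ℝ, -T ≤ s ∧ s ≤ t ∧ t ≤ T ∧ t - s ≤ δ ∧
    (p.1, s) ∈ graph π ∧ (p.2, t) ∈ graph π ∧ gLe π (p.1, s) (p.2, t)}

/-- `Δ³_{T,δ}(π)`. -/
def Delta3 (π : PathSp) (T δ : ℝ) : Set (EReal × EReal × EReal) :=
  {p | ∃ s t u : ℝ, -T ≤ s ∧ s ≤ t ∧ t ≤ u ∧ u ≤ T ∧ u - s ≤ δ ∧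
    (p.1, s) ∈ graph π ∧ (p.2.1, t) ∈ graph π ∧ (p.2.2, u) ∈ graph π ∧
    gLe π (p.1, s) (p.2.1, t) ∧ gLe π (p.2.1, t) (p.2.2, u)}

/-- `S⁺_{T,δ,ε,r}`. -/
def Splus (T δ ε r : ℝ) : Set PathSp :=
  {π | ∃ x y : EReal, (x, y) ∈ Delta2 π T δ ∧ x ≤ (r : EReal) ∧ ((r + ε : ℝ) : EReal) ≤ y}

/-- `S⁻_{T,δ,ε,r}`. -/
def Sminus (T δ ε r : ℝ) : Set PathSp :=
  {π | ∃ x y : EReal, (x, y) ∈ Delta2 π T δ ∧ y ≤ (r : EReal) ∧ ((r + ε : ℝ) : EReal) ≤ x}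

/-- `S²_{T,δ,ε,r}`. -/
def S2 (T δ ε r : ℝ) : Set PathSp := Splus T δ ε r ∪ Sminus T δ ε r

/-- `S^{+−}_{T,δ,ε,r}`. -/
def Spm (T δ ε r : ℝ) : Set PathSp :=
  {π | ∃ x y z : EReal, (x, y, z) ∈ Delta3 π T δ ∧
    x ≤ (r : EReal) ∧ z ≤ (r : EReal) ∧ ((r + ε : ℝ) : EReal) ≤ y}

/-- `S^{−+}_{T,δ,ε,r}`. -/
def Smp (T δ ε r : ℝ) : Set PathSp :=
  {π | ∃ x y z : EReal, (x, y, z) ∈ Delta3 π T δ ∧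
    y ≤ (r : EReal) ∧ ((r + ε : ℝ) : EReal) ≤ x ∧ ((r + ε : ℝ) : EReal) ≤ z}

/-- `S^{++}_{T,δ,ε,r}`. -/
def Spp (T δ ε r : ℝ) : Set PathSp :=
  {π | ∃ x y z : EReal, (x, y, z) ∈ Delta3 π T δ ∧
    x ≤ (r : EReal) ∧ ((r + ε : ℝ) : EReal) ≤ y ∧ y ≤ ((r + 2 * ε : ℝ) : EReal) ∧
    ((r + 3 * ε : ℝ) : EReal) ≤ z}

/-- `S^{−−}_{T,δ,ε,r}`. -/
def Smm (T δ ε r : ℝ) : Set PathSp :=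
  {π | ∃ x y z : EReal, (x, y, z) ∈ Delta3 π T δ ∧
    z ≤ (r : EReal) ∧ ((r + ε : ℝ) : EReal) ≤ y ∧ y ≤ ((r + 2 * ε : ℝ) : EReal) ∧
    ((r + 3 * ε : ℝ) : EReal) ≤ x}

/-- `S^J_{T,δ,ε,r}`. -/
def SJ (T δ ε r : ℝ) : Set PathSp := Spp T δ ε r ∪ Smm T δ ε r

/-- `S^M_{T,δ,ε,r}`. -/
def SM (T δ ε r : ℝ) : Set PathSp := Spm T δ ε r ∪ Smp T δ ε r

/-- `Δ²_{T,δ}(π₁,π₂)` for a pair of paths. -/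
def Delta2Pair (π₁ π₂ : PathSp) (T δ : ℝ) : Set (EReal × EReal × EReal × EReal) :=
  {q | ∃ s₁ t₁ s₂ t₂ : ℝ,
    -T ≤ s₁ ∧ s₁ ≤ t₁ ∧ t₁ ≤ T ∧ -T ≤ s₂ ∧ s₂ ≤ t₂ ∧ t₂ ≤ T ∧
    (q.1, s₁) ∈ graph π₁ ∧ (q.2.1, t₁) ∈ graph π₁ ∧ gLe π₁ (q.1, s₁) (q.2.1, t₁) ∧
    (q.2.2.1, s₂) ∈ graph π₂ ∧ (q.2.2.2, t₂) ∈ graph π₂ ∧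
    gLe π₂ (q.2.2.1, s₂) (q.2.2.2, t₂) ∧
    max t₁ t₂ - min s₁ s₂ ≤ δ}

/-- `C^M_{T,δ,ε,r}`. -/
def CM (T δ ε r : ℝ) : Set (PathSp × PathSp) :=
  {pp | ∃ x₁ y₁ x₂ y₂ : EReal, (x₁, y₁, x₂, y₂) ∈ Delta2Pair pp.1 pp.2 T δ ∧
    x₁ ≤ (r : EReal) ∧ y₂ ≤ (r : EReal) ∧
    ((r + ε : ℝ) : EReal) ≤ y₁ ∧ ((r + ε : ℝ) : EReal) ≤ x₂}

/-- `φ(x) = x/√(1+x²)` extended to `ℝ̄`. -/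
def phiR (x : EReal) : ℝ :=
  if x = ⊤ then 1 else if x = ⊥ then -1 else x.toReal / Real.sqrt (1 + x.toReal ^ 2)

/-- The metric `d_ℝ̄` on `ℝ̄`. -/
def dR (x y : EReal) : ℝ := |phiR x - phiR y|

/-- The modulus of continuity `m_{T,δ}(π)`. -/
def modC (π : PathSp) (T δ : ℝ) : ℝ :=
  sSup {h | ∃ x y : EReal, (x, y) ∈ Delta2 π T δ ∧ h = dR x y}

/-- The modulus `m^J_{T,δ}(π)`. -/
def modJ (π : PathSp) (T δ : ℝ) : ℝ :=
  sSup {h | ∃ x y z : EReal, (x, y, z) ∈ Delta3 π T δ ∧ h = min (dR y x) (dR y z)}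

/-- The modulus `m^M_{T,δ}(π)`. -/
def modM (π : PathSp) (T δ : ℝ) : ℝ :=
  sSup {h | ∃ x y z : EReal, (x, y, z) ∈ Delta3 π T δ ∧
    h = sInf ((fun w => dR y w) '' uIcc x z)}

/-- `T²_{T,δ,η}`. -/
def T2set (T δ η : ℝ) : Set PathSp :=
  {π | ∃ x y : EReal, (x, y) ∈ Delta2 π T δ ∧ dR x y > η}

/-- `T⁺_{T,δ,η}`. -/
def Tplus (T δ η : ℝ) : Set PathSp :=
  {π | ∃ x y : EReal, (x, y) ∈ Delta2 π T δ ∧ x < y ∧ dR x y > η}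

/-- `T⁻_{T,δ,η}`. -/
def Tminus (T δ η : ℝ) : Set PathSp :=
  {π | ∃ x y : EReal, (x, y) ∈ Delta2 π T δ ∧ y < x ∧ dR x y > η}

/-- `T^{++}_{T,δ,η}`. -/
def Tpp (T δ η : ℝ) : Set PathSp :=
  {π | ∃ x y z : EReal, (x, y, z) ∈ Delta3 π T δ ∧ x < y ∧ y < z ∧
    dR x y > η ∧ dR y z > η}

/-- `T^{+−}_{T,δ,η}`. -/
def Tpm (T δ η : ℝ) : Set PathSp :=
  {π | ∃ x y z : EReal, (x, y, z) ∈ Delta3 π T δ ∧ x < y ∧ z < y ∧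
    dR x y > η ∧ dR y z > η}

/-- `T^{−+}_{T,δ,η}`. -/
def Tmp (T δ η : ℝ) : Set PathSp :=
  {π | ∃ x y z : EReal, (x, y, z) ∈ Delta3 π T δ ∧ y < x ∧ y < z ∧
    dR x y > η ∧ dR y z > η}

/-- `T^{−−}_{T,δ,η}`. -/
def Tmm (T δ η : ℝ) : Set PathSp :=
  {π | ∃ x y z : EReal, (x, y, z) ∈ Delta3 π T δ ∧ y < x ∧ z < y ∧
    dR x y > η ∧ dR y z > η}

/-- `T^J_{T,δ,η}`. -/
def TJ (T δ η : ℝ) : Set PathSp := Tpp T δ η ∪ Tmm T δ η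

/-- `T^M_{T,δ,η}`. -/
def TM (T δ η : ℝ) : Set PathSp := Tpm T δ η ∪ Tmp T δ η

/-- A continuous path. -/
def IsContP (π : PathSp) : Prop := ∀ t ∈ π.I, π.l t = π.r t

/-- The space `Π_c` of continuous paths. -/
def PathC : Type := {π : PathSp // IsContP π}

/-- The (J1 = M1) metric on `Π_c`. -/
def dC (π₁ π₂ : PathC) : ℝ := dJ1 π₁.1 π₂.1

/-- The topology on `Π_c`. -/
def CTop : TopologicalSpace PathC := ballTop dC

/-- A connected path: the domain is an interval. -/
def IsConn (π : PathSp) : Prop := π.I.OrdConnected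

/-- A bi-infinite path: the domain is all of `ℝ`. -/
def IsBiInf (π : PathSp) : Prop := π.I = univ

/-- `π'` extends `π`. -/
def ExtendsP (π' π : PathSp) : Prop := fgraph π ⊆ fgraph π'

/-- The relation `π₁ ◁ π₂`. -/
def OrdBelow (π₁ π₂ : PathSp) : Prop :=
  ∃ π₁' π₂' : PathSp, IsBiInf π₁' ∧ IsBiInf π₂' ∧ ExtendsP π₁' π₁ ∧ ExtendsP π₂' π₂ ∧
    ∀ t : ℝ, π₁'.l t ≤ π₂'.l t ∧ π₁'.r t ≤ π₂'.r t

/-- A noncrossing set of paths. -/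
def Noncrossing (A : Set PathSp) : Prop :=
  ∀ π₁ ∈ A, ∀ π₂ ∈ A, OrdBelow π₁ π₂ ∨ OrdBelow π₂ π₁

/-- `π₁` crosses `π₂`. -/
def Crosses (π₁ π₂ : PathSp) : Prop := ¬ OrdBelow π₁ π₂ ∧ ¬ OrdBelow π₂ π₁

/-- `π₁` collides with `π₂` at time `t`: at time `t` the two paths jump over some
interval in opposite directions. -/
def CollidesAt (π₁ π₂ : PathSp) (t : ℝ) : Prop :=
  t ∈ π₁.I ∧ t ∈ π₂.I ∧
  ((π₁.r t < π₁.l t ∧ π₁.r t < π₂.r t ∧ π₂.l t < π₁.l t ∧ π₂.l t < π₂.r t) ∨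
   (π₁.l t < π₁.r t ∧ π₁.l t < π₂.l t ∧ π₂.r t < π₁.r t ∧ π₂.r t < π₂.l t))

/-- `∂I`: the finite boundary points of the domain of `π`. -/
def bdryI (π : PathSp) : Set ℝ := π.I \ interior π.I

/-- `t` is the (finite) minimum of `I`. -/
def IsMinOf (I : Set ℝ) (t : ℝ) : Prop := t ∈ I ∧ ∀ s ∈ I, t ≤ s

/-- `t` is the (finite) maximum of `I`. -/
def IsMaxOf (I : Set ℝ) (t : ℝ) : Prop := t ∈ I ∧ ∀ s ∈ I, s ≤ t

/-- `∂⁻I`, the set of finite lower boundary points. -/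
def bdryMinus (I : Set ℝ) : Set ℝ := {t | IsMinOf I t}

/-- `∂⁺I`, the set of finite upper boundary points. -/
def bdryPlus (I : Set ℝ) : Set ℝ := {t | IsMaxOf I t}

/-- Evaluation of a path at a point `t±` of the split real line; `(t, false)` stands
for `t−` and `(t, true)` for `t+`. -/
def pev (π : PathSp) (tb : ℝ × Bool) : EReal := if tb.2 then π.r tb.1 else π.l tb.1

/-- `I^𝔰_π`: points `t±` with `t ∈ I_π`, excluding `s−` and `u+` where `s, u` are the
initial and final times. -/
def Isplit (π : PathSp) : Set (ℝ × Bool) :=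
  {tb | tb.1 ∈ π.I ∧ ¬ (tb.2 = false ∧ IsMinOf π.I tb.1) ∧ ¬ (tb.2 = true ∧ IsMaxOf π.I tb.1)}

/-- `I^l_π`. -/
def Il (π : PathSp) : Set (ℝ × Bool) :=
  Isplit π ∪ {tb | tb.2 = false ∧ IsMinOf π.I tb.1 ∧ π.r tb.1 < π.l tb.1}
    ∪ {tb | tb.2 = true ∧ IsMaxOf π.I tb.1 ∧ π.l tb.1 < π.r tb.1}

/-- `I^r_π`. -/
def Ir (π : PathSp) : Set (ℝ × Bool) :=
  Isplit π ∪ {tb | tb.2 = false ∧ IsMinOf π.I tb.1 ∧ π.l tb.1 < π.r tb.1}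
    ∪ {tb | tb.2 = true ∧ IsMaxOf π.I tb.1 ∧ π.r tb.1 < π.l tb.1}

/-- `L(π)`. -/
def Lset (π : PathSp) : Set (EReal × ℝ × Bool) := {p | p.2 ∈ Il π ∧ p.1 < pev π p.2}

/-- `R(π)`. -/
def Rset (π : PathSp) : Set (EReal × ℝ × Bool) := {p | p.2 ∈ Ir π ∧ pev π p.2 < p.1}

/-- `L°(π)`. -/
def Lo (π : PathSp) : Set (EReal × ℝ) :=
  {p | p.2 ∈ interior π.I ∧ p.1 < min (π.l p.2) (π.r p.2)}

/-- `L̄(π)`. -/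
def Lbar (π : PathSp) : Set (EReal × ℝ) :=
  {p | p.2 ∈ π.I ∧ p.1 ≤ max (π.l p.2) (π.r p.2)}

/-- `L^c(π) = S ∖ L°(π)`. -/
def Lc (π : PathSp) : Set (EReal × ℝ) := (Lo π)ᶜ

/-- `R°(π)`. -/
def Ro (π : PathSp) : Set (EReal × ℝ) :=
  {p | p.2 ∈ interior π.I ∧ max (π.l p.2) (π.r p.2) < p.1}

/-- `R̄(π)`. -/
def Rbar (π : PathSp) : Set (EReal × ℝ) :=
  {p | p.2 ∈ π.I ∧ min (π.l p.2) (π.r p.2) ≤ p.1}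

/-- `π^⟨2⟩`: the ordered pairs of points of the closed graph. -/
def gr2 (π : PathSp) : Set ((EReal × ℝ) × (EReal × ℝ)) :=
  {q | q.1 ∈ graph π ∧ q.2 ∈ graph π ∧ gLe π q.1 q.2}

/-- `π̄^⟨2⟩`: the ordered pairs of points of the filled graph. -/
def fgr2 (π : PathSp) : Set ((EReal × ℝ) × (EReal × ℝ)) :=
  {q | q.1 ∈ fgraph π ∧ q.2 ∈ fgraph π ∧ gLe π q.1 q.2}

/-- Convergence `A_n → B` of closed subsets of `Y` in the local Hausdorff topology,
expressed through its standard sequential characterisation (Lemma 2.2 of the paper,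
which also shows this is independent of the choice of metric): every point of `B` is a
limit of points of `A_{n,∞} = A_n ∪ {∞}` in the one-point compactification, and every
cluster point in `Y` of such a sequence lies in `B`. -/
def LHConv {Y : Type*} [TopologicalSpace Y] (A : ℕ → Set Y) (B : Set Y) : Prop :=
  (∀ x ∈ B, ∃ u : ℕ → OnePoint Y,
    (∀ n, u n ∈ insert OnePoint.infty ((fun y : Y => (y : OnePoint Y)) '' A n)) ∧
      Tendsto u atTop (𝓝 (x : OnePoint Y))) ∧
  (∀ x : Y, (∃ u : ℕ → OnePoint Y,
    (∀ n, u n ∈ insert OnePoint.infty ((fun y : Y => (y : OnePoint Y)) '' A n)) ∧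
      MapClusterPt (x : OnePoint Y) atTop u) → x ∈ B)

/-- Convergence of compact sets of paths in the Hausdorff "metric" associated to `dM1`. -/
def HausConvM1 (A : ℕ → Set PathSp) (B : Set PathSp) : Prop :=
  Tendsto (fun n => hausDist dM1 (A n) B) atTop (𝓝 0)


/-! ### Auxiliary lemmas for the proof -/

section AuxTanh

lemma tanh_eq' (x : ℝ) : Real.tanh x = 1 - 2 / (Real.exp (2 * x) + 1) := by
  have h1 : (0:ℝ) < Real.exp x := Real.exp_pos x
  have h3 : Real.exp (2 * x) = Real.exp x * Real.exp x := by
    rw [two_mul, Real.exp_add]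
  have h4 : Real.exp (-x) = (Real.exp x)⁻¹ := Real.exp_neg x
  rw [Real.tanh_eq_sinh_div_cosh, Real.sinh_eq, Real.cosh_eq, h3, h4]
  have h5 : Real.exp x + (Real.exp x)⁻¹ ≠ 0 := by positivity
  have h6 : Real.exp x * Real.exp x + 1 ≠ 0 := by positivity
  field_simp
  ring

lemma tanh_lt_one' (x : ℝ) : Real.tanh x < 1 := by
  rw [tanh_eq']
  have h : (0:ℝ) < 2 / (Real.exp (2*x) + 1) := by positivity
  linarith

lemma neg_one_lt_tanh' (x : ℝ) : -1 < Real.tanh x := by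
  rw [tanh_eq']
  have h : (0:ℝ) < Real.exp (2*x) := Real.exp_pos _
  have h2 : 2 / (Real.exp (2*x) + 1) < 2 := by
    rw [div_lt_iff₀ (by positivity)]; nlinarith
  linarith

lemma abs_tanh_lt_one (x : ℝ) : |Real.tanh x| < 1 :=
  abs_lt.mpr ⟨neg_one_lt_tanh' x, tanh_lt_one' x⟩

lemma tanh_strictMono : StrictMono Real.tanh := by
  intro a b hab
  rw [tanh_eq', tanh_eq']
  have ha : (0:ℝ) < Real.exp (2*a) + 1 := by positivity
  have h : Real.exp (2*a) < Real.exp (2*b) := Real.exp_lt_exp.mpr (by linarith)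
  have h2 : 2 / (Real.exp (2*b) + 1) < 2 / (Real.exp (2*a) + 1) :=
    div_lt_div_of_pos_left (by norm_num) ha (by linarith)
  linarith

lemma continuous_tanh' : Continuous Real.tanh := by
  have heq : Real.tanh = fun x => 1 - 2 / (Real.exp (2*x) + 1) := funext tanh_eq'
  rw [heq]
  refine continuous_const.sub (continuous_const.div ?_ ?_)
  · exact (Real.continuous_exp.comp (continuous_const.mul continuous_id)).add continuous_const
  · intro x; positivity

lemma tendsto_tanh_atTop' : Filter.Tendsto Real.tanh Filter.atTop (nhds 1) := by
  have hlin : Filter.Tendsto (fun x : ℝ => 2 * x) Filter.atTop Filter.atTop := by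
    apply Filter.tendsto_atTop_atTop.mpr
    exact fun b => ⟨b/2, fun a ha => by linarith⟩
  have h : Filter.Tendsto (fun x : ℝ => Real.exp (2*x) + 1) Filter.atTop Filter.atTop :=
    Filter.tendsto_atTop_add_const_right _ 1 (Real.tendsto_exp_atTop.comp hlin)
  have h2 : Filter.Tendsto (fun x : ℝ => 2 / (Real.exp (2*x) + 1)) Filter.atTop (nhds 0) :=
    Filter.Tendsto.div_atTop tendsto_const_nhds h
  have h3 := (tendsto_const_nhds (x := (1:ℝ)) (f := Filter.atTop (α := ℝ))).sub h2
  have heq : Real.tanh = fun x => 1 - 2 / (Real.exp (2*x) + 1) := funext tanh_eq'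
  rw [heq]
  simpa using h3

lemma tendsto_tanh_atBot' : Filter.Tendsto Real.tanh Filter.atBot (nhds (-1)) := by
  have hlin : Filter.Tendsto (fun x : ℝ => 2 * x) Filter.atBot Filter.atBot := by
    apply Filter.tendsto_atBot_atBot.mpr
    exact fun b => ⟨b/2, fun a ha => by linarith⟩
  have h : Filter.Tendsto (fun x : ℝ => Real.exp (2*x) + 1) Filter.atBot (nhds 1) := by
    have := (Real.tendsto_exp_atBot.comp hlin).add (tendsto_const_nhds (x := (1:ℝ)))
    simpa using this
  have h2 : Filter.Tendsto (fun x : ℝ => 2 / (Real.exp (2*x) + 1)) Filter.atBot (nhds 2) := by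
    have := Filter.Tendsto.div (tendsto_const_nhds (x := (2:ℝ))) h one_ne_zero
    rw [div_one] at this; exact this
  have h3 := (tendsto_const_nhds (x := (1:ℝ)) (f := Filter.atBot (α := ℝ))).sub h2
  have heq : Real.tanh = fun x => 1 - 2 / (Real.exp (2*x) + 1) := funext tanh_eq'
  rw [heq]
  have : (1:ℝ) - 2 = -1 := by norm_num
  rw [← this]
  exact h3

end AuxTanh

section AuxEtanh

@[simp] lemma etanh_top : etanh ⊤ = 1 := by simp [etanh]

@[simp] lemma etanh_bot : etanh ⊥ = -1 := by simp [etanh]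

@[simp] lemma etanh_coe (r : ℝ) : etanh (r : EReal) = Real.tanh r := by
  simp [etanh]

lemma abs_etanh_le_one (x : EReal) : |etanh x| ≤ 1 := by
  induction x with
  | bot => norm_num
  | coe r => rw [etanh_coe]; exact (abs_tanh_lt_one r).le
  | top => norm_num

lemma etanh_injective : Function.Injective etanh := by
  intro a b h
  induction a with
  | bot =>
    induction b with
    | bot => rfl
    | coe s =>
      rw [etanh_bot, etanh_coe] at h
      exact absurd h.symm (neg_one_lt_tanh' s).ne'
    | top => rw [etanh_bot, etanh_top] at h; norm_num at h
  | coe r =>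
    induction b with
    | bot =>
      rw [etanh_coe, etanh_bot] at h
      exact absurd h (neg_one_lt_tanh' r).ne'
    | coe s =>
      rw [etanh_coe, etanh_coe] at h
      exact congrArg (fun t : ℝ => (t : EReal)) (tanh_strictMono.injective h)
    | top =>
      rw [etanh_coe, etanh_top] at h
      exact absurd h (tanh_lt_one' r).ne
  | top =>
    induction b with
    | bot => rw [etanh_top, etanh_bot] at h; norm_num at h
    | coe s =>
      rw [etanh_top, etanh_coe] at h
      exact absurd h.symm (tanh_lt_one' s).ne
    | top => rfl

lemma continuous_etanh : Continuous etanh := by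
  rw [continuous_iff_continuousAt]
  intro x
  induction x with
  | bot =>
    have : Filter.Tendsto etanh (nhds (⊥ : EReal)) (nhds (-1)) := by
      rw [Metric.tendsto_nhds]
      intro ε hε
      obtain ⟨M, hM⟩ := Filter.eventually_atBot.mp
        (Metric.tendsto_nhds.mp tendsto_tanh_atBot' ε hε)
      filter_upwards [EReal.nhds_bot_basis.mem_of_mem (i := M) trivial] with y hy
      induction y with
      | bot => rw [etanh_bot]; simpa using hε
      | coe s =>
        rw [etanh_coe]
        refine hM s (le_of_lt ?_)
        rw [Set.mem_Iio] at hy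
        exact_mod_cast hy
      | top =>
        rw [Set.mem_Iio] at hy
        exact absurd hy not_top_lt
    simpa [ContinuousAt] using this
  | coe r =>
    have : ContinuousAt etanh (r : EReal) := by
      unfold ContinuousAt
      rw [EReal.nhds_coe, Filter.tendsto_map'_iff]
      have hc : (etanh ∘ fun s : ℝ => (s : EReal)) = Real.tanh := funext fun s => etanh_coe s
      rw [hc, etanh_coe]
      exact continuous_tanh'.tendsto r
    exact this
  | top =>
    have : Filter.Tendsto etanh (nhds (⊤ : EReal)) (nhds 1) := by
      rw [Metric.tendsto_nhds]
      intro ε hε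
      obtain ⟨M, hM⟩ := Filter.eventually_atTop.mp
        (Metric.tendsto_nhds.mp tendsto_tanh_atTop' ε hε)
      filter_upwards [EReal.nhds_top_basis.mem_of_mem (i := M) trivial] with y hy
      induction y with
      | bot =>
        rw [Set.mem_Ioi] at hy
        exact absurd hy not_lt_bot
      | coe s =>
        rw [etanh_coe]
        refine hM s (le_of_lt ?_)
        rw [Set.mem_Ioi] at hy
        exact_mod_cast hy
      | top => rw [etanh_top]; simpa using hε
    simpa [ContinuousAt] using this

end AuxEtanh

section AuxTheta

lemma theta_inl (p : EReal × ℝ) :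
    theta (Sum.inl p) = (etanh p.1 / (1 + |p.2|), Real.tanh p.2) := rfl

lemma theta_inr (b : Bool) : theta (Sum.inr b) = (0, if b then 1 else -1) := rfl

lemma one_add_abs_pos (t : ℝ) : 0 < 1 + |t| := by positivity

lemma continuous_thetaF : Continuous (fun p : EReal × ℝ => (theta (Sum.inl p)).1) := by
  simp only [theta_inl]
  exact (continuous_etanh.comp continuous_fst).div
    (continuous_const.add (continuous_abs.comp continuous_snd))
    (fun p => (one_add_abs_pos p.2).ne')

lemma continuous_thetaS : Continuous (fun p : EReal × ℝ => (theta (Sum.inl p)).2) := by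
  simp only [theta_inl]
  exact continuous_tanh'.comp continuous_snd

lemma theta_inl_injective :
    Function.Injective (fun p : EReal × ℝ => theta (Sum.inl p)) := by
  intro p q h
  simp only [theta_inl, Prod.mk.injEq] at h
  obtain ⟨h1, h2⟩ := h
  have ht : p.2 = q.2 := tanh_strictMono.injective h2
  rw [ht, div_eq_div_iff (one_add_abs_pos q.2).ne' (one_add_abs_pos q.2).ne'] at h1
  exact Prod.ext (etanh_injective (mul_right_cancel₀ (one_add_abs_pos q.2).ne' h1)) ht

lemma theta_fst_abs_le (z : Rsq) : |(theta z).1| ≤ 1 := by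
  rcases z with p | b
  · rw [theta_inl, abs_div, abs_of_pos (one_add_abs_pos p.2)]
    rw [div_le_one (one_add_abs_pos p.2)]
    have := abs_etanh_le_one p.1
    have := abs_nonneg p.2
    linarith
  · rw [theta_inr]; norm_num

lemma theta_snd_abs_le (z : Rsq) : |(theta z).2| ≤ 1 := by
  rcases z with p | b
  · rw [theta_inl]; exact (abs_tanh_lt_one p.2).le
  · rw [theta_inr]; cases b <;> norm_num

end AuxTheta

section AuxDSqz

lemma dSqz_nonneg (z z' : Rsq) : 0 ≤ dSqz z z' := Real.sqrt_nonneg _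

lemma dSqz_symm (z z' : Rsq) : dSqz z z' = dSqz z' z := by
  unfold dSqz
  ring_nf

lemma sqrt_sq_add_sq_le_abs_add_abs (a b : ℝ) : Real.sqrt (a^2 + b^2) ≤ |a| + |b| := by
  rw [show |a| + |b| = Real.sqrt ((|a| + |b|)^2) from (Real.sqrt_sq (by positivity)).symm]
  apply Real.sqrt_le_sqrt
  have ha := abs_nonneg a
  have hb := abs_nonneg b
  nlinarith [sq_abs a, sq_abs b]

lemma abs_le_sqrt_sq_add_sq_left (a b : ℝ) : |a| ≤ Real.sqrt (a^2 + b^2) := by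
  rw [← Real.sqrt_sq_eq_abs]
  exact Real.sqrt_le_sqrt (by nlinarith [sq_nonneg b])

lemma abs_le_sqrt_sq_add_sq_right (a b : ℝ) : |b| ≤ Real.sqrt (a^2 + b^2) := by
  rw [← Real.sqrt_sq_eq_abs]
  exact Real.sqrt_le_sqrt (by nlinarith [sq_nonneg a])

lemma sqrt_triangle_aux (a1 b1 a2 b2 : ℝ) :
    Real.sqrt ((a1 + a2)^2 + (b1 + b2)^2) ≤
      Real.sqrt (a1^2 + b1^2) + Real.sqrt (a2^2 + b2^2) := by
  have h1 : (0:ℝ) ≤ a1^2 + b1^2 := by positivity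
  have h2 : (0:ℝ) ≤ a2^2 + b2^2 := by positivity
  have key : a1*a2 + b1*b2 ≤ Real.sqrt (a1^2 + b1^2) * Real.sqrt (a2^2 + b2^2) := by
    rcases le_or_gt (a1*a2 + b1*b2) 0 with h | h
    · exact h.trans (by positivity)
    · have hs : (a1*a2 + b1*b2)^2 ≤
          (Real.sqrt (a1^2 + b1^2) * Real.sqrt (a2^2 + b2^2))^2 := by
        rw [mul_pow, Real.sq_sqrt h1, Real.sq_sqrt h2]
        nlinarith [sq_nonneg (a1*b2 - a2*b1)]
      have hss := Real.sqrt_le_sqrt hs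
      rwa [Real.sqrt_sq h.le, Real.sqrt_sq (by positivity)] at hss
  have hsq : (a1 + a2)^2 + (b1 + b2)^2 ≤
      (Real.sqrt (a1^2 + b1^2) + Real.sqrt (a2^2 + b2^2))^2 := by
    nlinarith [Real.sq_sqrt h1, Real.sq_sqrt h2]
  calc Real.sqrt ((a1 + a2)^2 + (b1 + b2)^2)
      ≤ Real.sqrt ((Real.sqrt (a1^2 + b1^2) + Real.sqrt (a2^2 + b2^2))^2) :=
        Real.sqrt_le_sqrt hsq
    _ = _ := Real.sqrt_sq (by positivity)

lemma dSqz_triangle (z₁ z₂ z₃ : Rsq) : dSqz z₁ z₃ ≤ dSqz z₁ z₂ + dSqz z₂ z₃ := by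
  unfold dSqz
  have h1 : (theta z₁).1 - (theta z₃).1 =
      ((theta z₁).1 - (theta z₂).1) + ((theta z₂).1 - (theta z₃).1) := by ring
  have h2 : (theta z₁).2 - (theta z₃).2 =
      ((theta z₁).2 - (theta z₂).2) + ((theta z₂).2 - (theta z₃).2) := by ring
  rw [h1, h2]
  exact sqrt_triangle_aux _ _ _ _

lemma dSqz_le_three (z z' : Rsq) : dSqz z z' ≤ 3 := by
  unfold dSqz
  have h1 := abs_le.mp (theta_fst_abs_le z)
  have h2 := abs_le.mp (theta_fst_abs_le z')
  have h3 := abs_le.mp (theta_snd_abs_le z)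
  have h4 := abs_le.mp (theta_snd_abs_le z')
  have hsum : ((theta z).1 - (theta z').1)^2 + ((theta z).2 - (theta z').2)^2 ≤ 9 := by
    nlinarith [h1.1, h1.2, h2.1, h2.2, h3.1, h3.2, h4.1, h4.2]
  calc Real.sqrt (((theta z).1 - (theta z').1)^2 + ((theta z).2 - (theta z').2)^2)
      ≤ Real.sqrt 9 := Real.sqrt_le_sqrt hsum
    _ = 3 := by
        rw [show (9:ℝ) = 3^2 by norm_num, Real.sqrt_sq (by norm_num)]

lemma abs_fst_le_dSqz (z z' : Rsq) : |(theta z).1 - (theta z').1| ≤ dSqz z z' :=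
  abs_le_sqrt_sq_add_sq_left _ _

lemma abs_snd_le_dSqz (z z' : Rsq) : |(theta z).2 - (theta z').2| ≤ dSqz z z' :=
  abs_le_sqrt_sq_add_sq_right _ _

lemma dSqz_inl_pos {z x : EReal × ℝ} (h : z ≠ x) :
    0 < dSqz (Sum.inl z) (Sum.inl x) := by
  rcases (dSqz_nonneg (Sum.inl z) (Sum.inl x)).lt_or_eq with h' | h'
  · exact h'
  · exfalso
    apply h
    have h0 : dSqz (Sum.inl z) (Sum.inl x) = 0 := h'.symm
    unfold dSqz at h0
    have harg : ((theta (Sum.inl z)).1 - (theta (Sum.inl x)).1)^2 +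
        ((theta (Sum.inl z)).2 - (theta (Sum.inl x)).2)^2 = 0 := by
      have hle := Real.sqrt_eq_zero'.mp h0
      have : (0:ℝ) ≤ ((theta (Sum.inl z)).1 - (theta (Sum.inl x)).1)^2 +
          ((theta (Sum.inl z)).2 - (theta (Sum.inl x)).2)^2 := by positivity
      linarith
    have e1 : (theta (Sum.inl z)).1 = (theta (Sum.inl x)).1 := by
      nlinarith [sq_nonneg ((theta (Sum.inl z)).1 - (theta (Sum.inl x)).1),
        sq_nonneg ((theta (Sum.inl z)).2 - (theta (Sum.inl x)).2)]
    have e2 : (theta (Sum.inl z)).2 = (theta (Sum.inl x)).2 := by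
      nlinarith [sq_nonneg ((theta (Sum.inl z)).1 - (theta (Sum.inl x)).1),
        sq_nonneg ((theta (Sum.inl z)).2 - (theta (Sum.inl x)).2)]
    exact theta_inl_injective (Prod.ext e1 e2)

lemma le_dSqz_inl_inr (x : EReal × ℝ) (b : Bool) :
    1 - |Real.tanh x.2| ≤ dSqz (Sum.inl x) (Sum.inr b) := by
  have h := abs_snd_le_dSqz (Sum.inl x) (Sum.inr b)
  simp only [theta_inl, theta_inr] at h
  refine le_trans ?_ h
  have h2 := abs_sub_abs_le_abs_sub (if b then (1:ℝ) else -1) (Real.tanh x.2)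
  rw [abs_sub_comm] at h2
  have h3 : |(if b then (1:ℝ) else -1)| = 1 := by cases b <;> norm_num
  linarith

lemma one_sub_abs_tanh_pos (t : ℝ) : 0 < 1 - |Real.tanh t| := by
  have := abs_tanh_lt_one t
  linarith

end AuxDSqz

section AuxKey

lemma key_nhds {x : EReal × ℝ} {W : Set (EReal × ℝ)} (hW : W ∈ 𝓝 x) :
    ∃ δ > 0, ∀ z : EReal × ℝ, dSqz (Sum.inl z) (Sum.inl x) < δ → z ∈ W := by
  obtain ⟨U, hUW, hUopen, hxU⟩ := mem_nhds_iff.mp hW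
  set t := x.2 with ht
  set δ0 := min (Real.tanh (t+1) - Real.tanh t) (Real.tanh t - Real.tanh (t-1)) with hδ0def
  have hδ0 : 0 < δ0 :=
    lt_min (sub_pos.mpr (tanh_strictMono (by linarith)))
      (sub_pos.mpr (tanh_strictMono (by linarith)))
  have hmemK : ∀ z : EReal × ℝ, dSqz (Sum.inl z) (Sum.inl x) < δ0 →
      z.2 ∈ Icc (t-1) (t+1) := by
    intro z hz
    have habs : |Real.tanh z.2 - Real.tanh t| < δ0 := by
      have hle := abs_snd_le_dSqz (Sum.inl z) (Sum.inl x)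
      simp only [theta_inl] at hle
      exact lt_of_le_of_lt hle hz
    have hmin1 := min_le_left (Real.tanh (t+1) - Real.tanh t)
      (Real.tanh t - Real.tanh (t-1))
    have hmin2 := min_le_right (Real.tanh (t+1) - Real.tanh t)
      (Real.tanh t - Real.tanh (t-1))
    have h1 : Real.tanh z.2 < Real.tanh (t+1) := by
      have := (abs_lt.mp habs).2
      linarith
    have h2 : Real.tanh (t-1) < Real.tanh z.2 := by
      have := (abs_lt.mp habs).1
      linarith
    exact ⟨(tanh_strictMono.lt_iff_lt.mp h2).le, (tanh_strictMono.lt_iff_lt.mp h1).le⟩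
  set D := ((univ : Set EReal) ×ˢ Icc (t-1) (t+1)) \ U with hDdef
  have hDcomp : IsCompact D := (isCompact_univ.prod isCompact_Icc).diff hUopen
  rcases D.eq_empty_or_nonempty with hDe | hDne
  · refine ⟨δ0, hδ0, fun z hz => ?_⟩
    by_contra hzW
    have hzD : z ∈ D := ⟨⟨trivial, hmemK z hz⟩, fun hzU => hzW (hUW hzU)⟩
    rw [hDe] at hzD
    exact hzD
  · have hcont : ContinuousOn (fun z : EReal × ℝ => dSqz (Sum.inl z) (Sum.inl x)) D := by
      apply Continuous.continuousOn
      unfold dSqz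
      exact (((continuous_thetaF.sub continuous_const).pow 2).add
        ((continuous_thetaS.sub continuous_const).pow 2)).sqrt
    obtain ⟨z₀, hz₀D, hz₀min⟩ := hDcomp.exists_isMinOn hDne hcont
    have hz₀pos : 0 < dSqz (Sum.inl z₀) (Sum.inl x) :=
      dSqz_inl_pos (fun h => hz₀D.2 (by rw [h]; exact hxU))
    refine ⟨min δ0 (dSqz (Sum.inl z₀) (Sum.inl x)), lt_min hδ0 hz₀pos, fun z hz => ?_⟩
    by_contra hzW
    have hzD : z ∈ D :=
      ⟨⟨trivial, hmemK z (hz.trans_le (min_le_left _ _))⟩, fun hzU => hzW (hUW hzU)⟩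
    exact absurd (hz₀min hzD) (not_le.mpr (hz.trans_le (min_le_right _ _)))

lemma cont_nhds (x : EReal × ℝ) {η : ℝ} (hη : 0 < η) :
    ∃ W ∈ 𝓝 x, ∀ z ∈ W, dSqz (Sum.inl z) (Sum.inl x) < η := by
  have h1 : ∀ᶠ z in 𝓝 x, |(theta (Sum.inl z)).1 - (theta (Sum.inl x)).1| < η/3 := by
    have hc := Metric.tendsto_nhds.mp (continuous_thetaF.tendsto x) (η/3) (by positivity)
    simpa [Real.dist_eq] using hc
  have h2 : ∀ᶠ z in 𝓝 x, |(theta (Sum.inl z)).2 - (theta (Sum.inl x)).2| < η/3 := by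
    have hc := Metric.tendsto_nhds.mp (continuous_thetaS.tendsto x) (η/3) (by positivity)
    simpa [Real.dist_eq] using hc
  refine ⟨_, Filter.eventually_iff.mp (h1.and h2), fun z hz => ?_⟩
  obtain ⟨hz1, hz2⟩ := hz
  have hle := sqrt_sq_add_sq_le_abs_add_abs
    ((theta (Sum.inl z)).1 - (theta (Sum.inl x)).1)
    ((theta (Sum.inl z)).2 - (theta (Sum.inl x)).2)
  unfold dSqz
  linarith

end AuxKey

section AuxCorr

/-- The trivial monotone correspondence. -/
def C0 (A B : Set Rsq) : Set (Rsq × Rsq) :=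
  (A ×ˢ ({Sum.inr false} : Set Rsq)) ∪ (({Sum.inr true} : Set Rsq) ×ˢ B)

lemma isCorr_C0 (G1 G2 : Set (EReal × ℝ)) :
    IsCorr (starSet G1) (starSet G2) (C0 (starSet G1) (starSet G2)) := by
  have hf : (Sum.inr false : Rsq) ∈ starSet G2 := Or.inr (Or.inl rfl)
  have ht : (Sum.inr true : Rsq) ∈ starSet G1 := Or.inr (Or.inr rfl)
  refine ⟨?_, ?_, ?_⟩
  · rintro ⟨a, b⟩ (⟨ha, hb⟩ | ⟨ha, hb⟩)
    · rw [Set.mem_singleton_iff] at hb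
      exact ⟨ha, hb ▸ hf⟩
    · rw [Set.mem_singleton_iff] at ha
      exact ⟨ha ▸ ht, hb⟩
  · intro a ha
    exact ⟨Sum.inr false, hf, Or.inl ⟨ha, rfl⟩⟩
  · intro b hb
    exact ⟨Sum.inr true, ht, Or.inr ⟨rfl, hb⟩⟩

lemma isMono_C0 (π₁ π₂ : PathSp) (A B : Set Rsq) : IsMono π₁ π₂ (C0 A B) := by
  rintro ⟨z, hz, z', hz', h1, h2⟩
  rcases hz with ⟨-, hz2⟩ | ⟨hz1, -⟩
  · rw [Set.mem_singleton_iff] at hz2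
    rw [hz2] at h2
    rcases hzz : z'.2 with p | b'
    · rw [hzz] at h2
      simp [sLt] at h2
    · rw [hzz] at h2
      simp [sLt] at h2
  · rw [Set.mem_singleton_iff] at hz1
    rw [hz1] at h1
    rcases hzz : z'.1 with p | b'
    · rw [hzz] at h1
      simp [sLt] at h1
    · rw [hzz] at h1
      simp [sLt] at h1

lemma bddAbove_dSqz_image (C : Set (Rsq × Rsq)) :
    BddAbove ((fun z : Rsq × Rsq => dSqz z.1 z.2) '' C) := by
  refine ⟨3, ?_⟩
  rintro y ⟨z, -, rfl⟩
  exact dSqz_le_three _ _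

lemma le_corrSup {C : Set (Rsq × Rsq)} {z : Rsq × Rsq} (hz : z ∈ C) :
    dSqz z.1 z.2 ≤ corrSup C :=
  le_csSup (bddAbove_dSqz_image C) (Set.mem_image_of_mem _ hz)

lemma exists_corr_lt (π₁ π₂ : PathSp) (G1 G2 : Set (EReal × ℝ)) {ε : ℝ}
    (h : sInf {h | ∃ C, IsCorr (starSet G1) (starSet G2) C ∧ IsMono π₁ π₂ C ∧
      h = corrSup C} < ε) :
    ∃ C, IsCorr (starSet G1) (starSet G2) C ∧ ∀ z ∈ C, dSqz z.1 z.2 < ε := by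
  have hne : {h | ∃ C, IsCorr (starSet G1) (starSet G2) C ∧ IsMono π₁ π₂ C ∧
      h = corrSup C}.Nonempty :=
    ⟨corrSup (C0 (starSet G1) (starSet G2)), C0 (starSet G1) (starSet G2),
      isCorr_C0 G1 G2, isMono_C0 π₁ π₂ _ _, rfl⟩
  obtain ⟨h', ⟨C, hC, -, rfl⟩, hlt⟩ := exists_lt_of_csInf_lt hne h
  exact ⟨C, hC, fun z hz => lt_of_le_of_lt (le_corrSup hz) hlt⟩

end AuxCorr

section AuxClosed

lemma isClosed_graph_gen (π : PathSp) (V : ℝ → Set EReal)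
    (hcl : ∀ t, IsClosed (V t))
    (hsub : ∀ t, V t ⊆ uIcc (π.l t) (π.r t))
    (hlm : ∀ t, π.l t ∈ V t) (hrm : ∀ t, π.r t ∈ V t) :
    IsClosed {p : EReal × ℝ | p.2 ∈ π.I ∧ p.1 ∈ V p.2} := by
  rw [isClosed_iff_clusterPt]
  intro p hp
  set F := 𝓝 p ⊓ 𝓟 {q : EReal × ℝ | q.2 ∈ π.I ∧ q.1 ∈ V q.2} with hFdef
  haveI hFne : F.NeBot := hp
  have hmemS : ∀ᶠ q : EReal × ℝ in F, q.2 ∈ π.I ∧ q.1 ∈ V q.2 :=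
    le_principal_iff.mp inf_le_right
  have hsnd : Tendsto (Prod.snd : EReal × ℝ → ℝ) F (𝓝 p.2) :=
    (continuous_snd.tendsto p).mono_left inf_le_left
  have hfst : Tendsto (Prod.fst : EReal × ℝ → EReal) F (𝓝 p.1) :=
    (continuous_fst.tendsto p).mono_left inf_le_left
  have htI : p.2 ∈ π.I := by
    have hcl2 : p.2 ∈ closure π.I := by
      rw [mem_closure_iff_clusterPt]
      exact Filter.neBot_of_le
        (le_inf hsnd (Filter.tendsto_principal.mpr (hmemS.mono fun q hq => hq.1)))
    rwa [π.closed_I.closure_eq] at hcl2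
  have hbetween : ∀ᶠ q : EReal × ℝ in F,
      min (π.l q.2) (π.r q.2) ≤ q.1 ∧ q.1 ≤ max (π.l q.2) (π.r q.2) := by
    refine hmemS.mono fun q hq => ?_
    rcases Set.mem_uIcc.mp (hsub q.2 hq.2) with ⟨ha, hb⟩ | ⟨ha, hb⟩
    · exact ⟨le_trans (min_le_left _ _) ha, le_trans hb (le_max_right _ _)⟩
    · exact ⟨le_trans (min_le_right _ _) ha, le_trans hb (le_max_left _ _)⟩
  have htri : (F ⊓ 𝓟 {q : EReal × ℝ | q.2 < p.2}).NeBot ∨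
      (F ⊓ 𝓟 {q : EReal × ℝ | q.2 = p.2}).NeBot ∨
      (F ⊓ 𝓟 {q : EReal × ℝ | p.2 < q.2}).NeBot := by
    by_contra hcon
    push_neg at hcon
    obtain ⟨h1, h2, h3⟩ := hcon
    rw [Filter.inf_principal_eq_bot] at h1 h2 h3
    have e1 : ∀ᶠ q : EReal × ℝ in F, ¬ q.2 < p.2 := h1
    have e2 : ∀ᶠ q : EReal × ℝ in F, ¬ q.2 = p.2 := h2
    have e3 : ∀ᶠ q : EReal × ℝ in F, ¬ p.2 < q.2 := h3
    obtain ⟨q, hq1, hq2, hq3⟩ := (e1.and (e2.and e3)).exists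
    rcases lt_trichotomy q.2 p.2 with h | h | h
    · exact hq1 h
    · exact hq2 h
    · exact hq3 h
  rcases htri with hc | hc | hc
  · haveI := hc
    have hsnd' : Tendsto (Prod.snd : EReal × ℝ → ℝ) (F ⊓ 𝓟 {q : EReal × ℝ | q.2 < p.2})
        (𝓝[π.I ∩ Iio p.2] p.2) := by
      rw [nhdsWithin]
      refine Filter.tendsto_inf.mpr ⟨hsnd.mono_left inf_le_left,
        Filter.tendsto_principal.mpr ?_⟩
      have ha : ∀ᶠ q : EReal × ℝ in F ⊓ 𝓟 {q : EReal × ℝ | q.2 < p.2},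
          q.2 ∈ π.I ∧ q.1 ∈ V q.2 := hmemS.filter_mono inf_le_left
      have hb : ∀ᶠ q : EReal × ℝ in F ⊓ 𝓟 {q : EReal × ℝ | q.2 < p.2}, q.2 < p.2 :=
        le_principal_iff.mp inf_le_right
      filter_upwards [ha, hb] with q hqa hqb
      exact ⟨hqa.1, hqb⟩
    have hlten := (π.left_cont p.2 htI).comp hsnd'
    have hrten := (π.left_lim p.2 htI).comp hsnd'
    have hmin : Tendsto (fun q : EReal × ℝ => min (π.l q.2) (π.r q.2))
        (F ⊓ 𝓟 {q : EReal × ℝ | q.2 < p.2}) (𝓝 (π.l p.2)) := by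
      simpa using hlten.min hrten
    have hmax : Tendsto (fun q : EReal × ℝ => max (π.l q.2) (π.r q.2))
        (F ⊓ 𝓟 {q : EReal × ℝ | q.2 < p.2}) (𝓝 (π.l p.2)) := by
      simpa using hlten.max hrten
    have hfst' : Tendsto (Prod.fst : EReal × ℝ → EReal)
        (F ⊓ 𝓟 {q : EReal × ℝ | q.2 < p.2}) (𝓝 p.1) := hfst.mono_left inf_le_left
    have hbet' := hbetween.filter_mono
      (inf_le_left : F ⊓ 𝓟 {q : EReal × ℝ | q.2 < p.2} ≤ F)
    have hle1 : π.l p.2 ≤ p.1 :=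
      le_of_tendsto_of_tendsto hmin hfst' (hbet'.mono fun q hq => hq.1)
    have hle2 : p.1 ≤ π.l p.2 :=
      le_of_tendsto_of_tendsto hfst' hmax (hbet'.mono fun q hq => hq.2)
    exact ⟨htI, le_antisymm hle2 hle1 ▸ hlm p.2⟩
  · haveI := hc
    have heq : ∀ᶠ q : EReal × ℝ in F ⊓ 𝓟 {q : EReal × ℝ | q.2 = p.2},
        q.1 ∈ V p.2 := by
      have ha : ∀ᶠ q : EReal × ℝ in F ⊓ 𝓟 {q : EReal × ℝ | q.2 = p.2},
          q.2 ∈ π.I ∧ q.1 ∈ V q.2 := hmemS.filter_mono inf_le_left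
      have hb : ∀ᶠ q : EReal × ℝ in F ⊓ 𝓟 {q : EReal × ℝ | q.2 = p.2}, q.2 = p.2 :=
        le_principal_iff.mp inf_le_right
      filter_upwards [ha, hb] with q hqa hqb
      rw [← hqb]
      exact hqa.2
    have hfst' : Tendsto (Prod.fst : EReal × ℝ → EReal)
        (F ⊓ 𝓟 {q : EReal × ℝ | q.2 = p.2}) (𝓝 p.1) := hfst.mono_left inf_le_left
    have hclos : p.1 ∈ closure (V p.2) := mem_closure_of_tendsto hfst' heq
    rw [(hcl p.2).closure_eq] at hclos
    exact ⟨htI, hclos⟩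
  · haveI := hc
    have hsnd' : Tendsto (Prod.snd : EReal × ℝ → ℝ) (F ⊓ 𝓟 {q : EReal × ℝ | p.2 < q.2})
        (𝓝[π.I ∩ Ioi p.2] p.2) := by
      rw [nhdsWithin]
      refine Filter.tendsto_inf.mpr ⟨hsnd.mono_left inf_le_left,
        Filter.tendsto_principal.mpr ?_⟩
      have ha : ∀ᶠ q : EReal × ℝ in F ⊓ 𝓟 {q : EReal × ℝ | p.2 < q.2},
          q.2 ∈ π.I ∧ q.1 ∈ V q.2 := hmemS.filter_mono inf_le_left
      have hb : ∀ᶠ q : EReal × ℝ in F ⊓ 𝓟 {q : EReal × ℝ | p.2 < q.2}, p.2 < q.2 :=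
        le_principal_iff.mp inf_le_right
      filter_upwards [ha, hb] with q hqa hqb
      exact ⟨hqa.1, hqb⟩
    have hlten := (π.right_lim p.2 htI).comp hsnd'
    have hrten := (π.right_cont p.2 htI).comp hsnd'
    have hmin : Tendsto (fun q : EReal × ℝ => min (π.l q.2) (π.r q.2))
        (F ⊓ 𝓟 {q : EReal × ℝ | p.2 < q.2}) (𝓝 (π.r p.2)) := by
      simpa using hlten.min hrten
    have hmax : Tendsto (fun q : EReal × ℝ => max (π.l q.2) (π.r q.2))
        (F ⊓ 𝓟 {q : EReal × ℝ | p.2 < q.2}) (𝓝 (π.r p.2)) := by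
      simpa using hlten.max hrten
    have hfst' : Tendsto (Prod.fst : EReal × ℝ → EReal)
        (F ⊓ 𝓟 {q : EReal × ℝ | p.2 < q.2}) (𝓝 p.1) := hfst.mono_left inf_le_left
    have hbet' := hbetween.filter_mono
      (inf_le_left : F ⊓ 𝓟 {q : EReal × ℝ | p.2 < q.2} ≤ F)
    have hle1 : π.r p.2 ≤ p.1 :=
      le_of_tendsto_of_tendsto hmin hfst' (hbet'.mono fun q hq => hq.1)
    have hle2 : p.1 ≤ π.r p.2 :=
      le_of_tendsto_of_tendsto hfst' hmax (hbet'.mono fun q hq => hq.2)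
    exact ⟨htI, le_antisymm hle2 hle1 ▸ hrm p.2⟩

lemma isClosed_graph (π : PathSp) : IsClosed (graph π) := by
  have hset : graph π =
      {p : EReal × ℝ | p.2 ∈ π.I ∧ p.1 ∈ ({π.l p.2, π.r p.2} : Set EReal)} := by
    ext p
    simp [graph, Set.mem_insert_iff]
  rw [hset]
  refine isClosed_graph_gen π _ (fun t => (Set.finite_singleton _).insert _ |>.isClosed)
    (fun t x hx => ?_) (fun t => Set.mem_insert _ _)
    (fun t => Set.mem_insert_of_mem _ rfl)
  rcases hx with rfl | hx
  · exact Set.left_mem_uIcc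
  · rw [Set.mem_singleton_iff] at hx
    rw [hx]
    exact Set.right_mem_uIcc

lemma isClosed_fgraph (π : PathSp) : IsClosed (fgraph π) :=
  isClosed_graph_gen π (fun t => uIcc (π.l t) (π.r t)) (fun t => isClosed_Icc)
    (fun t => Set.Subset.rfl) (fun t => Set.left_mem_uIcc) (fun t => Set.right_mem_uIcc)

end AuxClosed

section AuxLH

lemma lh_of_approx (Gn : ℕ → Set (EReal × ℝ)) (G : Set (EReal × ℝ)) (hG : IsClosed G)
    (ε : ℕ → ℝ) (hε : Tendsto ε atTop (𝓝 0))
    (h1 : ∀ n, ∀ p ∈ G, ∃ a ∈ starSet (Gn n), dSqz a (Sum.inl p) < ε n)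
    (h2 : ∀ n, ∀ p ∈ Gn n, ∃ b ∈ starSet G, dSqz (Sum.inl p) b < ε n) :
    LHConv Gn G := by
  constructor
  · intro x hx
    choose a ha hd using fun n => h1 n x hx
    refine ⟨fun n => Sum.elim (fun y : EReal × ℝ => (y : OnePoint (EReal × ℝ)))
      (fun _ => OnePoint.infty) (a n), fun n => ?_, ?_⟩
    · rcases hy : a n with y | b
      · have hmem : a n ∈ Sum.inl '' Gn n := by
          rcases ha n with h | h
          · exact h
          · exfalso
            rw [hy] at h
            rcases h with h | h
            · exact Sum.inl_ne_inr h
            · rw [Set.mem_singleton_iff] at h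
              exact Sum.inl_ne_inr h
        obtain ⟨q, hq, hq2⟩ := hmem
        rw [hy] at hq2
        have hqy : q = y := Sum.inl_injective hq2
        show Sum.elim (fun y : EReal × ℝ => (y : OnePoint (EReal × ℝ)))
          (fun _ => OnePoint.infty) (a n) ∈ _
        rw [hy]
        exact Set.mem_insert_of_mem _ ⟨y, hqy ▸ hq, rfl⟩
      · show Sum.elim (fun y : EReal × ℝ => (y : OnePoint (EReal × ℝ)))
          (fun _ => OnePoint.infty) (a n) ∈ _
        rw [hy]
        exact Set.mem_insert _ _
    · rw [Filter.tendsto_def]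
      intro s hs
      rw [OnePoint.nhds_coe_eq, Filter.mem_map] at hs
      obtain ⟨δ, hδ, hδW⟩ := key_nhds hs
      have hev : ∀ᶠ n in atTop, ε n < min δ (1 - |Real.tanh x.2|) :=
        hε.eventually_lt_const (lt_min hδ (one_sub_abs_tanh_pos x.2))
      filter_upwards [hev] with n hn
      rcases hy : a n with y | b
      · have hdd := hd n
        rw [hy] at hdd
        have hys : y ∈ (fun y : EReal × ℝ => (y : OnePoint (EReal × ℝ))) ⁻¹' s :=
          hδW y (hdd.trans (hn.trans_le (min_le_left _ _)))
        show Sum.elim (fun y : EReal × ℝ => (y : OnePoint (EReal × ℝ)))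
          (fun _ => OnePoint.infty) (a n) ∈ s
        rw [hy]
        exact hys
      · exfalso
        have hdd := hd n
        rw [hy] at hdd
        have hlt : dSqz (Sum.inr b) (Sum.inl x) < 1 - |Real.tanh x.2| :=
          hdd.trans (hn.trans_le (min_le_right _ _))
        rw [dSqz_symm] at hlt
        linarith [le_dSqz_inl_inr x b]
  · rintro x ⟨u, hu, hclus⟩
    rw [← hG.closure_eq]
    rw [mem_closure_iff_nhds]
    intro W hW
    obtain ⟨δ, hδ, hδW⟩ := key_nhds hW
    set c := 1 - |Real.tanh x.2| with hcdef
    set δ' := min δ c with hδ'def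
    have hδ'pos : 0 < δ' := lt_min hδ (one_sub_abs_tanh_pos x.2)
    obtain ⟨W', hW', hW'd⟩ := cont_nhds x (show (0:ℝ) < δ'/2 by linarith)
    have hfreq : ∃ᶠ n in atTop,
        u n ∈ (fun y : EReal × ℝ => (y : OnePoint (EReal × ℝ))) '' W' := by
      apply mapClusterPt_iff_frequently.mp hclus
      rw [OnePoint.nhds_coe_eq, Filter.mem_map]
      exact Filter.mem_of_superset hW' (Set.subset_preimage_image _ _)
    have hev : ∀ᶠ n in atTop, ε n < δ'/2 := hε.eventually_lt_const (by linarith)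
    obtain ⟨n, hn1, hn2⟩ := (hfreq.and_eventually hev).exists
    obtain ⟨p, hpW', hpu⟩ := hn1
    have hpG : p ∈ Gn n := by
      have hun := hu n
      rw [← hpu] at hun
      rcases hun with h | h
      · exact absurd h (OnePoint.coe_ne_infty p)
      · obtain ⟨q, hq, hq2⟩ := h
        have hqp : q = p := by
          apply Option.some_injective
          exact hq2
        exact hqp ▸ hq
    obtain ⟨b, hb, hbd⟩ := h2 n p hpG
    have hpx : dSqz (Sum.inl p) (Sum.inl x) < δ'/2 := hW'd p hpW'
    have hbx : dSqz b (Sum.inl x) < δ' := by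
      have htri := dSqz_triangle b (Sum.inl p) (Sum.inl x)
      rw [dSqz_symm b (Sum.inl p)] at htri
      have := hbd.trans hn2
      linarith
    rcases hb with ⟨z, hz, hz2⟩ | h
    · refine ⟨z, hδW z ?_, hz⟩
      rw [← hz2] at hbx
      exact hbx.trans_le (min_le_left _ _)
    · exfalso
      simp only [Set.mem_insert_iff, Set.mem_singleton_iff] at h
      have hge : c ≤ dSqz b (Sum.inl x) := by
        rcases h with rfl | rfl
        · rw [dSqz_symm]
          exact le_dSqz_inl_inr x false
        · rw [dSqz_symm]
          exact le_dSqz_inl_inr x true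
      have := hbx.trans_le (min_le_right δ c)
      linarith

lemma main_graph (πn : ℕ → PathSp) (π : PathSp)
    (hconv : Tendsto (fun n => dJ1 (πn n) π) atTop (𝓝 0)) :
    LHConv (fun n => graph (πn n)) (graph π) := by
  have hpos : ∀ n : ℕ, (0:ℝ) < 1 / (n + 1) := fun n => by positivity
  apply lh_of_approx _ _ (isClosed_graph π) (fun n => dJ1 (πn n) π + 1 / (n + 1))
  · have := hconv.add tendsto_one_div_add_atTop_nhds_zero_nat
    simpa using this
  · intro n p hp
    have hlt : dJ1 (πn n) π < dJ1 (πn n) π + 1 / (n + 1) :=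
      lt_add_of_pos_right _ (hpos n)
    obtain ⟨C, hC, hCd⟩ := exists_corr_lt (πn n) π (graph (πn n)) (graph π) hlt
    obtain ⟨a, haA, haC⟩ := hC.2.2 (Sum.inl p) (Or.inl ⟨p, hp, rfl⟩)
    exact ⟨a, haA, hCd (a, Sum.inl p) haC⟩
  · intro n p hp
    have hlt : dJ1 (πn n) π < dJ1 (πn n) π + 1 / (n + 1) :=
      lt_add_of_pos_right _ (hpos n)
    obtain ⟨C, hC, hCd⟩ := exists_corr_lt (πn n) π (graph (πn n)) (graph π) hlt
    obtain ⟨b, hbB, hbC⟩ := hC.2.1 (Sum.inl p) (Or.inl ⟨p, hp, rfl⟩)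
    exact ⟨b, hbB, hCd (Sum.inl p, b) hbC⟩

lemma main_fgraph (πn : ℕ → PathSp) (π : PathSp)
    (hconv : Tendsto (fun n => dM1 (πn n) π) atTop (𝓝 0)) :
    LHConv (fun n => fgraph (πn n)) (fgraph π) := by
  have hpos : ∀ n : ℕ, (0:ℝ) < 1 / (n + 1) := fun n => by positivity
  apply lh_of_approx _ _ (isClosed_fgraph π) (fun n => dM1 (πn n) π + 1 / (n + 1))
  · have := hconv.add tendsto_one_div_add_atTop_nhds_zero_nat
    simpa using this
  · intro n p hp
    have hlt : dM1 (πn n) π < dM1 (πn n) π + 1 / (n + 1) :=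
      lt_add_of_pos_right _ (hpos n)
    obtain ⟨C, hC, hCd⟩ := exists_corr_lt (πn n) π (fgraph (πn n)) (fgraph π) hlt
    obtain ⟨a, haA, haC⟩ := hC.2.2 (Sum.inl p) (Or.inl ⟨p, hp, rfl⟩)
    exact ⟨a, haA, hCd (a, Sum.inl p) haC⟩
  · intro n p hp
    have hlt : dM1 (πn n) π < dM1 (πn n) π + 1 / (n + 1) :=
      lt_add_of_pos_right _ (hpos n)
    obtain ⟨C, hC, hCd⟩ := exists_corr_lt (πn n) π (fgraph (πn n)) (fgraph π) hlt
    obtain ⟨b, hbB, hbC⟩ := hC.2.1 (Sum.inl p) (Or.inl ⟨p, hp, rfl⟩)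
    exact ⟨b, hbB, hCd (Sum.inl p, b) hbC⟩

end AuxLH

/-- **Lemma (Convergence of graphs).**
If `π_n → π` in the J1 topology then the closed graphs converge in the local Hausdorff
topology on `Cl(S)`; if `π_n → π` in the M1 topology then the filled graphs converge in
the local Hausdorff topology on `Cl(S)`. -/
theorem convergence_of_graphs
    (πn : ℕ → PathSp) (π : PathSp) :
    (J1Conv πn π → LHConv (fun n => graph (πn n)) (graph π)) ∧
    (M1Conv πn π → LHConv (fun n => fgraph (πn n)) (fgraph π)) := by
  constructor
  · intro h
    exact main_graph πn π h
  · intro h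
    exact main_fgraph πn π h

end PathsPaper
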